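/- Termination of the Hydra game: the map r sending a finite rooted tree T to the sequence (a_i) ∈ ℕ^(ω,0), where a_i is the number of leaves of T at depth i, is a ranking function relative to the lexicographic well-founded order (comparing at the greatest index where the sequences differ); i.e., every tree T' obtained from T by one Hydra move satisfies r(T') < r(T). Consequently the Hydra game terminates: there is no infinite sequence of trees T_0, T_1, … where each T_{n+1} results from T_n by a Hydra move. -/
import Mathlib


/-- Finite rooted trees: a node together with the list of its subtrees. -/
inductive HTree : Type
  | node : List HTree → HTree

open HTree

mutual
  /-- `leavesAt T i` is the number of leaves of `T` at depth `i`. -/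
  def leavesAt : HTree → ℕ → ℕ
    | .node [], 0 => 1
    | .node [], _ + 1 => 0
    | .node (_ :: _), 0 => 0
    | .node (c :: cs), n + 1 => leavesAtList (c :: cs) n
  /-- The total number of leaves at depth `i` below the roots of a list of trees,
  where the roots are taken to have depth `0`. -/
  def leavesAtList : List HTree → ℕ → ℕ
    | [], _ => 0
    | c :: cs, n => leavesAt c n + leavesAtList cs n
end

/-- One Hydra step, seen from the grandparent of the chosen leaf: `GMove n t t'`
holds if `t'` results from `t` by choosing a leaf `l` at depth `≥ 2` in `t`,
adding `n` new leaves as children of the grandparent of `l`, and deleting `l`. -/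
inductive GMove (n : ℕ) : HTree → HTree → Prop
  /-- the current node is the grandparent of the chosen leaf -/
  | graft (cs₁ cs₂ ds₁ ds₂ : List HTree) :
      GMove n (node (cs₁ ++ node (ds₁ ++ node [] :: ds₂) :: cs₂))
              (node ((cs₁ ++ node (ds₁ ++ ds₂) :: cs₂) ++
                      List.replicate n (node [])))
  /-- the action happens in one of the subtrees -/
  | deeper (cs₁ cs₂ : List HTree) {c c' : HTree} :
      GMove n c c' → GMove n (node (cs₁ ++ c :: cs₂)) (node (cs₁ ++ c' :: cs₂))

/-- A move of the Hydra game on the whole tree (whose root is the root):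
either the chosen leaf has a grandparent (then `n` leaves are added there and
the leaf deleted), or the parent of the chosen leaf is the root (then the leaf
is simply deleted). -/
def Move (t t' : HTree) : Prop :=
  (∃ n : ℕ, GMove n t t') ∨
    ∃ cs₁ cs₂ : List HTree, t = node (cs₁ ++ node [] :: cs₂) ∧ t' = node (cs₁ ++ cs₂)

/-- The lexicographic-from-above order on sequences: `a < b` iff `a` and `b`
differ and `a_m < b_m` at the greatest index `m` where they differ. -/
def HydraLt (a b : ℕ → ℕ) : Prop :=
  ∃ m, a m < b m ∧ ∀ i, m < i → a i = b i

lemma leavesAtList_append (l₁ l₂ : List HTree) (n : ℕ) :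
    leavesAtList (l₁ ++ l₂) n = leavesAtList l₁ n + leavesAtList l₂ n := by
  induction l₁ with
  | nil => simp [leavesAtList]
  | cons c cs ih => simp [leavesAtList, ih]; omega

lemma leavesAt_node_succ (l : List HTree) (n : ℕ) :
    leavesAt (node l) (n + 1) = leavesAtList l n := by
  cases l <;> rfl

lemma leavesAt_nil_succ (n : ℕ) : leavesAt (node []) (n + 1) = 0 := rfl

lemma leavesAtList_replicate (n k : ℕ) :
    leavesAtList (List.replicate n (node [])) k = if k = 0 then n else 0 := by
  induction n with
  | zero => simp [leavesAtList]
  | succ m ih =>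
    cases k <;> simp_all [List.replicate, leavesAtList, leavesAt] <;> omega

mutual
  def hgt : HTree → ℕ
    | .node cs => hgtList cs + 1
  def hgtList : List HTree → ℕ
    | [] => 0
    | c :: cs => max (hgt c) (hgtList cs)
end

mutual
  theorem leavesAt_eq_zero : ∀ (t : HTree) (i : ℕ), hgt t ≤ i → leavesAt t i = 0
    | node l, 0, h => by simp [hgt] at h
    | node l, k + 1, h => by
      rw [leavesAt_node_succ]
      exact leavesAtList_eq_zero l k (by simp [hgt] at h; omega)
  theorem leavesAtList_eq_zero : ∀ (l : List HTree) (i : ℕ), hgtList l ≤ i → leavesAtList l i = 0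
    | [], i, _ => rfl
    | c :: cs, i, h => by
      simp [hgtList] at h
      simp [leavesAtList, leavesAt_eq_zero c i h.1, leavesAtList_eq_zero cs i h.2]
end

lemma gmove_lt (n : ℕ) (t t' : HTree) (h : GMove n t t') :
    HydraLt (leavesAt t') (leavesAt t) := by
  induction h with
  | graft cs₁ cs₂ ds₁ ds₂ =>
    refine ⟨2, ?_, ?_⟩
    · show leavesAt _ (1 + 1) < leavesAt _ (1 + 1)
      rw [leavesAt_node_succ, leavesAt_node_succ]
      simp only [leavesAtList_append, leavesAtList, leavesAt_node_succ,
        leavesAtList_replicate]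
      simp [leavesAt]
    · intro i hi
      obtain ⟨j, rfl⟩ : ∃ j, i = j + 1 + 1 + 1 := ⟨i - 3, by omega⟩
      rw [leavesAt_node_succ, leavesAt_node_succ]
      simp only [leavesAtList_append, leavesAtList, leavesAt_node_succ,
        leavesAtList_replicate, leavesAt_nil_succ]
      simp
  | deeper cs₁ cs₂ hm ih =>
    obtain ⟨m, hlt, heq⟩ := ih
    refine ⟨m + 1, ?_, ?_⟩
    · rw [leavesAt_node_succ, leavesAt_node_succ]
      simp only [leavesAtList_append, leavesAtList]
      omega
    · intro i hi
      obtain ⟨j, rfl⟩ : ∃ j, i = j + 1 := ⟨i - 1, by omega⟩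
      rw [leavesAt_node_succ, leavesAt_node_succ]
      simp only [leavesAtList_append, leavesAtList]
      rw [heq j (by omega)]

lemma move_lt (T T' : HTree) (h : Move T T') : HydraLt (leavesAt T') (leavesAt T) := by
  rcases h with ⟨n, h⟩ | ⟨cs₁, cs₂, rfl, rfl⟩
  · exact gmove_lt n T T' h
  · refine ⟨1, ?_, ?_⟩
    · show leavesAt _ (0 + 1) < leavesAt _ (0 + 1)
      rw [leavesAt_node_succ, leavesAt_node_succ]
      simp [leavesAtList_append, leavesAtList, leavesAt]
    · intro i hi
      obtain ⟨j, rfl⟩ : ∃ j, i = j + 1 + 1 := ⟨i - 2, by omega⟩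
      rw [leavesAt_node_succ, leavesAt_node_succ]
      simp [leavesAtList_append, leavesAtList, leavesAt_nil_succ]

/-- Termination of the Hydra game: the map sending a tree `T` to
the (eventually zero) sequence `i ↦ (number of leaves of T at depth i)` is a
ranking function for the Hydra-move relation with respect to the well-founded
lexicographic-from-above order, i.e. every Hydra move strictly decreases it;
consequently there is no infinite sequence of Hydra moves. -/
theorem stmt_18 :
    (∀ T T' : HTree, Move T T' → HydraLt (leavesAt T') (leavesAt T)) ∧
    ¬ ∃ f : ℕ → HTree, ∀ k, Move (f k) (f (k + 1)) := by
  refine ⟨move_lt, ?_⟩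
  rintro ⟨f, hf⟩
  have wf : WellFounded (Finsupp.Lex (· > ·) (· < ·) : (ℕ →₀ ℕ) → (ℕ →₀ ℕ) → Prop) := by
    refine Finsupp.Lex.wellFounded (fun n => Nat.not_lt_zero n) (Nat.lt_wfRel.wf) ?_
    refine Subrelation.wf (r := (· < ·)) ?_ (Nat.lt_wfRel.wf)
    rintro a b ⟨h1, h2⟩
    simp only [Pi.compl_apply, compl_iff_not, gt_iff_lt, not_lt] at h1
    omega
  -- package leavesAt as finsupps
  set g : ℕ → (ℕ →₀ ℕ) := fun k =>
    Finsupp.onFinset (Finset.range (hgt (f k))) (leavesAt (f k))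
      (fun i hi => Finset.mem_range.2 (by by_contra h; exact hi (leavesAt_eq_zero _ _ (by omega))))
    with hg
  have hdesc : ∀ k, Finsupp.Lex (· > ·) (· < ·) (g (k + 1)) (g k) := by
    intro k
    obtain ⟨m, hlt, heq⟩ := move_lt (f k) (f (k + 1)) (hf k)
    rw [Finsupp.lex_def]
    exact ⟨m, fun d hd => heq d hd, hlt⟩
  obtain ⟨x, hx, hmin⟩ := wf.has_min (Set.range g) ⟨g 0, Set.mem_range_self 0⟩
  obtain ⟨k, rfl⟩ := hx
  exact hmin (g (k + 1)) (Set.mem_range_self _) (hdesc k)
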